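/- Every free group is residually solvable: for a free group F, the intersection of all terms F⁽ⁿ⁾ of its derived series is the trivial subgroup. -/

import Mathlib

open scoped Classical
open scoped commutatorElement

noncomputable section
namespace Magnus

open MonoidAlgebra FreeMonoid

variable {α : Type*}

abbrev R (α : Type*) : Type _ := MonoidAlgebra ℚ (FreeMonoid α)

instance (α : Type*) : CoeFun (R α) (fun _ => FreeMonoid α → ℚ) := ⟨fun x => ⇑x.coeff⟩

abbrev _root_.MonoidAlgebra.support {k G : Type*} [Semiring k] (x : MonoidAlgebra k G) :
    Finset G := x.coeff.support

instance (α : Type*) [DecidableEq α] : DecidableEq (FreeMonoid α) :=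
  inferInstanceAs (DecidableEq (List α))

def X (a : α) : R α := MonoidAlgebra.single (FreeMonoid.of a) 1

lemma ofList_replicate (a : α) : ∀ i : ℕ, ofList (List.replicate i a) = (of a) ^ i
  | 0 => rfl
  | i + 1 => by
    rw [pow_succ, ← ofList_replicate a i, List.replicate_succ']
    rw [ofList_append, ofList_singleton]

/-- coefficient of a product with a single on the left -/
lemma single_mul_coeff (w : List α) (c : ℚ) (y : R α) (m : List α) :
    (MonoidAlgebra.single (ofList w) c * y) (ofList m) =
      if w <+: m then c * y (ofList (m.drop w.length)) else 0 := by
  by_cases h : w <+: m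
  · obtain ⟨t, rfl⟩ := h
    rw [if_pos ⟨t, rfl⟩, List.drop_left]
    exact MonoidAlgebra.coeff_single_mul_eq_mul_coeff (ofList t) fun z _ => by
      constructor
      · intro hz
        have : w ++ toList z = w ++ t := congrArg toList hz
        have := List.append_cancel_left this
        exact (congrArg ofList this : _)
      · rintro rfl; rfl
  · rw [if_neg h]
    refine MonoidAlgebra.single_mul_apply_of_not_exists_mul _ _ ?_
    rintro ⟨d, hd⟩
    exact h ⟨toList d, (congrArg toList hd).symm⟩



def PowS (a : α) : Set (FreeMonoid α) := Set.range fun i : ℕ => ofList (List.replicate i a)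

lemma singleton_prefix_iff {a : α} {m : List α} : [a] <+: m ↔ m.head? = some a := by
  cases m with
  | nil => simp [List.IsPrefix]
  | cons c t =>
    constructor
    · rintro ⟨s, hs⟩
      cases hs; rfl
    · intro h
      cases h
      exact ⟨t, rfl⟩

/-- Key splitting lemma -/
lemma coeff_mul_powers {a : α} {x : R α} (hx : ∀ w ∈ x.support, w ∈ PowS a) (y : R α)
    (m : List α) (hm : m.Chain' (· ≠ ·)) :
    (x * y) (ofList m) = x 1 * y (ofList m) +
      (if m.head? = some a then x (of a) * y (ofList m.tail) else 0) := by
  set C := (if m.head? = some a then x (of a) * y (ofList m.tail) else 0) with hC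
  have hx' : x = ∑ w ∈ x.support, MonoidAlgebra.single w (x w) := by
    conv_lhs => rw [← MonoidAlgebra.ofCoeff_coeff x, ← Finsupp.sum_single x.coeff]
    rw [Finsupp.sum, MonoidAlgebra.ofCoeff_sum]
    rfl
  conv_lhs => rw [hx', Finset.sum_mul, MonoidAlgebra.coeff_sum,
    Finsupp.finset_sum_apply]
  have key : ∀ w ∈ x.support,
      (MonoidAlgebra.single w (x w) * y) (ofList m) =
      (if w = 1 then x 1 * y (ofList m) else 0) + (if w = of a then C else 0) := by
    intro w hw
    obtain ⟨i, rfl⟩ := hx w hw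
    dsimp only at hw ⊢
    beta_reduce
    match i with
    | 0 =>
      rw [single_mul_coeff]
      have h1 : (ofList (List.replicate 0 a)) = (1 : FreeMonoid α) := rfl
      rw [if_pos (by simp : List.replicate 0 a <+: m), h1, if_pos rfl,
        if_neg (fun h => FreeMonoid.of_ne_one a h.symm), add_zero]
      simp
    | 1 =>
      rw [single_mul_coeff]
      have h1 : ofList (List.replicate 1 a) = of a := rfl
      have hrep : List.replicate 1 a = [a] := rfl
      rw [h1, if_neg (FreeMonoid.of_ne_one a), if_pos rfl, zero_add, hC, hrep]
      by_cases hd : m.head? = some a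
      · rw [if_pos (singleton_prefix_iff.2 hd), if_pos hd]
        simp [List.drop_one]
      · rw [if_neg (fun h => hd (singleton_prefix_iff.1 h)), if_neg hd]
    | (i+2) =>
      rw [single_mul_coeff (w := List.replicate (i+2) a)]
      have hp : ¬ (List.replicate (i+2) a <+: m) := by
        rintro ⟨t, rfl⟩
        have he : List.replicate (i + 2) a ++ t = a :: a :: (List.replicate i a ++ t) := rfl
        rw [he] at hm
        exact (List.isChain_cons_cons.1 hm).1 rfl
      rw [if_neg hp, if_neg ?h1, if_neg ?h2, add_zero]
      case h1 =>
        intro h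
        have h2 : (List.replicate (i+2) a).length = (0:ℕ) := congrArg FreeMonoid.length h
        simp at h2
      case h2 =>
        intro h
        have h2 : (List.replicate (i+2) a).length = (1:ℕ) := congrArg FreeMonoid.length h
        simp at h2
    
  rw [Finset.sum_congr rfl key, Finset.sum_add_distrib, Finset.sum_ite_eq' x.support,
    Finset.sum_ite_eq' x.support]
  by_cases h1 : (1 : FreeMonoid α) ∈ x.support <;> by_cases h2 : of a ∈ x.support <;>
    simp only [if_pos, if_neg, h1, h2, if_true, if_false] <;>
    simp only [Finsupp.notMem_support_iff.1 (by assumption), zero_mul, hC] <;> simp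
  all_goals (try simp [Finsupp.notMem_support_iff.1 h1])

def hpos (a : α) : R α := 1 + X a

def gneg (n : ℕ) (a : α) : R α := ∑ i ∈ Finset.range (n+1), (-(X a))^i

lemma neg_X_pow (a : α) : ∀ i : ℕ,
    (-(X a))^i = MonoidAlgebra.single (ofList (List.replicate i a)) ((-1:ℚ)^i)
  | 0 => by rw [pow_zero, pow_zero, MonoidAlgebra.one_def]; rfl
  | i + 1 => by
    rw [pow_succ, neg_X_pow a i, X]
    have : (-(MonoidAlgebra.single (FreeMonoid.of a) (1:ℚ)) : R α)
        = MonoidAlgebra.single (FreeMonoid.of a) (-1:ℚ) := by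
      rw [MonoidAlgebra.single_neg]
    rw [this, MonoidAlgebra.single_mul_single]
    have he : ofList (List.replicate i a) * FreeMonoid.of a = ofList (List.replicate (i+1) a) := by
      rw [← ofList_singleton, ← ofList_append, ← List.replicate_succ']
    rw [he, pow_succ]

lemma mem_PowS_mul {a : α} {w₁ w₂ : FreeMonoid α} (h₁ : w₁ ∈ PowS a) (h₂ : w₂ ∈ PowS a) :
    w₁ * w₂ ∈ PowS a := by
  obtain ⟨i, rfl⟩ := h₁; obtain ⟨j, rfl⟩ := h₂
  exact ⟨i + j, by rw [← ofList_append, ← List.replicate_add]⟩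

lemma one_mem_PowS (a : α) : (1 : FreeMonoid α) ∈ PowS a := ⟨0, rfl⟩

lemma of_mem_PowS (a : α) : of a ∈ PowS a := ⟨1, rfl⟩

lemma supp_mul_PowS {a : α} {x y : R α} (hx : ∀ w ∈ x.support, w ∈ PowS a)
    (hy : ∀ w ∈ y.support, w ∈ PowS a) : ∀ w ∈ (x*y).support, w ∈ PowS a := by
  classical
  intro w hw
  have := MonoidAlgebra.support_coeff_mul_subset x y hw
  rw [Finset.mem_mul] at this
  obtain ⟨w₁, h₁, w₂, h₂, rfl⟩ := this
  exact mem_PowS_mul (hx _ h₁) (hy _ h₂)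

lemma supp_hpos (a : α) : ∀ w ∈ (hpos a).support, w ∈ PowS a := by
  intro w hw
  have := Finsupp.support_add hw
  rw [Finset.mem_union] at this
  rcases this with h | h
  · have := Finsupp.support_single_subset h
    rw [Finset.mem_singleton] at this
    · subst this; exact one_mem_PowS a
  · have := Finsupp.support_single_subset h
    rw [Finset.mem_singleton] at this
    subst this; exact of_mem_PowS a

lemma supp_gneg (n : ℕ) (a : α) : ∀ w ∈ (gneg n a).support, w ∈ PowS a := by
  intro w hw
  rw [MonoidAlgebra.support, gneg, MonoidAlgebra.coeff_sum] at hw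
  have := Finsupp.support_finset_sum hw
  rw [Finset.mem_biUnion] at this
  obtain ⟨i, _, hi⟩ := this
  rw [neg_X_pow] at hi
  have := Finsupp.support_single_subset hi
  rw [Finset.mem_singleton] at this
  subst this; exact ⟨i, rfl⟩

lemma supp_pow_PowS {a : α} {x : R α} (hx : ∀ w ∈ x.support, w ∈ PowS a) :
    ∀ e : ℕ, ∀ w ∈ (x^e).support, w ∈ PowS a
  | 0 => by
    intro w hw
    rw [pow_zero] at hw
    rw [MonoidAlgebra.one_def] at hw
    have := Finsupp.support_single_subset hw
    rw [Finset.mem_singleton] at this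
    subst this; exact one_mem_PowS a
  | e + 1 => by
    rw [pow_succ]
    exact supp_mul_PowS (supp_pow_PowS hx e) hx

lemma coeff_one_one : (1 : R α) 1 = 1 := by
  rw [MonoidAlgebra.one_def]; simp

lemma coeff_one_ne {w : FreeMonoid α} (h : w ≠ 1) : (1 : R α) w = 0 := by
  rw [MonoidAlgebra.one_def]
  exact Finsupp.single_eq_of_ne' (Ne.symm h)

lemma hpos_coeff_one (a : α) : hpos a 1 = 1 := by
  rw [hpos, MonoidAlgebra.coeff_add, Finsupp.add_apply, coeff_one_one, X, MonoidAlgebra.coeff_single,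
    Finsupp.single_eq_of_ne' (FreeMonoid.of_ne_one a), add_zero]

lemma hpos_coeff_of (a : α) : hpos a (of a) = 1 := by
  rw [hpos, MonoidAlgebra.coeff_add, Finsupp.add_apply, coeff_one_ne (FreeMonoid.of_ne_one a), X,
    MonoidAlgebra.coeff_single, Finsupp.single_eq_same]
  norm_num
  

lemma gneg_coeff_one (n : ℕ) (a : α) : gneg n a 1 = 1 := by
  rw [gneg, MonoidAlgebra.coeff_sum, Finsupp.finset_sum_apply]
  rw [Finset.sum_eq_single 0]
  · rw [pow_zero]; exact coeff_one_one
  · intro i _ hi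
    rw [neg_X_pow]
    refine Finsupp.single_eq_of_ne' ?_
    intro h
    have h2 : (List.replicate i a).length = (0:ℕ) := congrArg FreeMonoid.length h
    simp at h2; exact hi h2
  · intro h; simp at h

lemma gneg_coeff_of {n : ℕ} (hn : 1 ≤ n) (a : α) : gneg n a (of a) = -1 := by
  rw [gneg, MonoidAlgebra.coeff_sum, Finsupp.finset_sum_apply]
  rw [Finset.sum_eq_single 1]
  · rw [neg_X_pow]
    have h1 : ofList (List.replicate 1 a) = of a := rfl
    rw [h1, MonoidAlgebra.coeff_single, Finsupp.single_eq_same]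
    norm_num
  · intro i _ hi
    rw [neg_X_pow]
    refine Finsupp.single_eq_of_ne' ?_
    intro h
    have h2 : (List.replicate i a).length = (1:ℕ) := congrArg FreeMonoid.length h
    simp at h2; exact hi h2
  · intro h; simp at h; omega

lemma pow_coeff {a : α} {x : R α} (hx : ∀ w ∈ x.support, w ∈ PowS a)
    (h1 : x 1 = 1) {z : ℚ} (hz : x (of a) = z) :
    ∀ e : ℕ, (x^e) 1 = 1 ∧ (x^e) (of a) = e * z
  | 0 => by
    constructor
    · rw [pow_zero]; exact coeff_one_one
    · rw [pow_zero, coeff_one_ne (FreeMonoid.of_ne_one a)]; norm_num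
  | e + 1 => by
    obtain ⟨ih1, ih2⟩ := pow_coeff hx h1 hz e
    have hnil : ofList ([] : List α) = (1 : FreeMonoid α) := rfl
    have hsing : ofList ([a] : List α) = of a := rfl
    constructor
    · have h := coeff_mul_powers (supp_pow_PowS hx e) x [] List.isChain_nil
      rw [hnil] at h
      rw [pow_succ, h, ih1, h1]
      simp
    · have h := coeff_mul_powers (supp_pow_PowS hx e) x [a] (List.isChain_singleton a)
      rw [hsing] at h
      rw [pow_succ, h]
      simp only [List.head?_cons, if_pos rfl, List.tail_cons, hnil]
      rw [ih1, ih2, hz, h1]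
      push_cast
      ring


def factor (n : ℕ) (p : α × Bool) : R α := cond p.2 (hpos p.1) (gneg n p.1)

def W (n : ℕ) (L : List (α × Bool)) : R α := (L.map (factor n)).prod

lemma factor_supp (n : ℕ) (p : α × Bool) : ∀ w ∈ (factor n p).support, w ∈ PowS p.1 := by
  obtain ⟨a, b⟩ := p
  cases b
  · exact supp_gneg n a
  · exact supp_hpos a

lemma factor_coeff_one (n : ℕ) (p : α × Bool) : factor n p 1 = 1 := by
  obtain ⟨a, b⟩ := p
  cases b
  · exact gneg_coeff_one n a
  · exact hpos_coeff_one a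

lemma factor_coeff_of {n : ℕ} (hn : 1 ≤ n) (p : α × Bool) :
    factor n p (of p.1) = cond p.2 1 (-1) := by
  obtain ⟨a, b⟩ := p
  cases b
  · exact gneg_coeff_of hn a
  · exact hpos_coeff_of a


lemma head?_dropWhile_neg {β : Type*} (f : β → Bool) : ∀ (l : List β),
    ∀ x ∈ (l.dropWhile f).head?, ¬ f x
  | [] => by simp
  | b :: t => by
    intro x hx
    by_cases h : f b
    · rw [List.dropWhile_cons_of_pos h] at hx
      exact head?_dropWhile_neg f t x hx
    · rw [List.dropWhile_cons_of_neg h] at hx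
      simp only [List.head?_cons, Option.mem_def, Option.some.injEq] at hx
      subst hx; exact h

/-- The main combinatorial (Magnus-type) nonvanishing claim. -/
lemma main_claim {n : ℕ} (hn : 1 ≤ n) : ∀ N : ℕ, ∀ L : List (α × Bool), L.length ≤ N →
    (∀ (L₁ L₂ : List (α × Bool)) (x : α) (b : Bool), L ≠ L₁ ++ (x, b) :: (x, !b) :: L₂) →
    ∃ (μ : List α) (q : ℚ), q ≠ 0 ∧ μ.Chain' (· ≠ ·) ∧ μ.length ≤ L.length ∧
      (μ = [] ↔ L = []) ∧ (∀ p ∈ L.head?, μ.head? = some p.1) ∧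
      ∀ m : List α, m.Chain' (· ≠ ·) → μ.length ≤ m.length →
        (W n L) (ofList m) = if m = μ then q else 0 := by
  intro N
  induction N with
  | zero =>
    intro L hL _
    rw [Nat.le_zero, List.length_eq_zero_iff] at hL
    subst hL
    refine ⟨[], 1, one_ne_zero, List.isChain_nil, by simp, by simp, by simp, ?_⟩
    intro m _ _
    show (1 : R α) (ofList m) = _
    rcases m with _ | ⟨c, m'⟩
    · rw [if_pos rfl]; exact coeff_one_one
    · rw [if_neg (by simp)]
      refine coeff_one_ne ?_
      intro h
      have h2 : (c :: m').length = (0:ℕ) := congrArg FreeMonoid.length h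
      simp at h2
  | succ N ih =>
    intro L hL hred
    rcases L with _ | ⟨p, L'⟩
    · exact ih [] (by simp) (by simp)
    set f : α × Bool → Bool := fun q => decide (q = p) with hf
    set tk := (p :: L').takeWhile f with htk
    set dr := (p :: L').dropWhile f with hdr
    have hsplit : tk ++ dr = p :: L' := by
      rw [htk, hdr, List.takeWhile_append_dropWhile]
    set e := tk.length with he
    have htkr : tk = List.replicate e p := by
      rw [List.eq_replicate_iff]
      refine ⟨rfl, fun b hb => ?_⟩
      have hb' : b ∈ (p :: L').takeWhile f := htk ▸ hb
      have hfb : f b = true := List.mem_takeWhile_imp hb'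
      simpa [hf] using hfb
    have he1 : 1 ≤ e := by
      rw [he, htk, List.takeWhile_cons_of_pos (by simp [hf])]
      simp
    have hlen : e + dr.length = L'.length + 1 := by
      have := congrArg List.length hsplit
      simpa using this
    have hLl : L'.length + 1 ≤ N + 1 := by simpa using hL
    have hdrlen : dr.length ≤ N := by omega
    have hreddr : ∀ (L₁ L₂ : List (α × Bool)) (x : α) (b : Bool),
        dr ≠ L₁ ++ (x, b) :: (x, !b) :: L₂ := by
      intro L₁ L₂ x b hdx
      exact hred (tk ++ L₁) L₂ x b (by rw [← hsplit, hdx, List.append_assoc])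
    obtain ⟨μ', q', hq', hμc', hμl', hμn', hμh', hcoeff'⟩ := ih dr hdrlen hreddr
    have hdrhead : ∀ pd ∈ dr.head?, pd.1 ≠ p.1 := by
      intro pd hpd heq
      have hnp : ¬ f pd := head?_dropWhile_neg f (p :: L') pd (hdr ▸ hpd)
      have hpdp : pd ≠ p := by simpa [hf] using hnp
      obtain ⟨t, hdreq⟩ : ∃ t, dr = pd :: t := by
        rcases hh : dr with _ | ⟨x, t⟩
        · rw [hh] at hpd; simp at hpd
        · rw [hh] at hpd
          simp only [List.head?_cons, Option.mem_def, Option.some.injEq] at hpd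
          exact ⟨t, by rw [hpd]⟩
      have hb : pd.2 = !p.2 := by
        rcases p with ⟨pa, pb⟩; rcases pd with ⟨da, db⟩
        dsimp only at heq ⊢
        subst heq
        cases pb <;> cases db <;> first | rfl | exact absurd rfl hpdp
      have hdecomp : p :: L' = List.replicate (e-1) p ++ (p.1, p.2) :: (p.1, !p.2) :: t := by
        rw [← hsplit, htkr, hdreq]
        have hee : e = (e - 1) + 1 := by omega
        rw [hee, List.replicate_succ', List.append_assoc]
        congr 1
        rw [List.singleton_append, show pd = (p.1, !p.2) from Prod.ext heq hb]
      exact hred _ _ p.1 p.2 hdecomp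
    have hW : W n (p :: L') = (factor n p)^e * W n dr := by
      rw [W, ← hsplit, List.map_append, List.prod_append, htkr, List.map_replicate,
        List.prod_replicate]
      rfl
    set s : ℚ := cond p.2 1 (-1) with hs
    have hs0 : s ≠ 0 := by rcases p with ⟨pa, pb⟩; cases pb <;> simp [hs]
    obtain ⟨hpow1, hpowof⟩ := pow_coeff (factor_supp n p) (factor_coeff_one n p)
      (factor_coeff_of hn p) e
    refine ⟨p.1 :: μ', ((e : ℚ) * s) * q',
      mul_ne_zero (mul_ne_zero (by positivity) hs0) hq', ?_, ?_, by simp, ?_, ?_⟩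
    · refine List.isChain_cons.2 ⟨?_, hμc'⟩
      intro y hy
      rcases hh : dr with _ | ⟨pd, t⟩
      · have : μ' = [] := hμn'.2 hh
        rw [this] at hy; simp at hy
      · have hh' := hμh' pd (by rw [hh]; rfl)
        rw [hh'] at hy
        simp only [Option.mem_def, Option.some.injEq] at hy
        subst hy
        exact fun hcon => hdrhead pd (by rw [hh]; rfl) hcon.symm
    · simp only [List.length_cons]
      omega
    · intro pp hpp
      simp only [List.head?_cons, Option.mem_def, Option.some.injEq] at hpp
      subst hpp; rfl
    · intro m hm hlm
      simp only [List.length_cons] at hlm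
      rw [hW, coeff_mul_powers (supp_pow_PowS (factor_supp n p) e) (W n dr) m hm, hpow1, one_mul]
      have hfirst : (W n dr) (ofList m) = 0 := by
        rw [hcoeff' m hm (by omega), if_neg]
        intro hcon
        subst hcon
        omega
      rw [hfirst, zero_add]
      rcases m with _ | ⟨c, m'⟩
      · simp at hlm
      · simp only [List.head?_cons, List.tail_cons]
        by_cases hc : c = p.1
        · simp only [hc, eq_self_iff_true, if_true]; rw [hpowof]
          have hrest := hcoeff' m' hm.tail (by simp at hlm ⊢; omega)
          rw [hrest]
          subst hc
          by_cases hm' : m' = μ' <;> simp [hm', hs]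
        · simp only [Option.some.injEq, hc, if_false]; rw [if_neg (by simp [hc])]

section Trunc

variable (n : ℕ)

/-- coefficient of products vanishes below the sum of vanishing degrees -/
lemma supp_high_mul {x y : R α} {j k : ℕ}
    (hx : ∀ w ∈ x.support, j ≤ w.length) (hy : ∀ w ∈ y.support, k ≤ w.length) :
    ∀ w : FreeMonoid α, w.length < j + k → (x * y) w = 0 := by
  classical
  intro w hw
  by_contra h0
  have hw' : w ∈ (x*y).support := Finsupp.mem_support_iff.2 h0
  have := MonoidAlgebra.support_coeff_mul_subset x y hw'
  rw [Finset.mem_mul] at this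
  obtain ⟨w₁, h₁, w₂, h₂, rfl⟩ := this
  have : (w₁ * w₂).length = w₁.length + w₂.length := FreeMonoid.length_mul w₁ w₂
  have := hx w₁ h₁
  have := hy w₂ h₂
  omega

def truncF (x : R α) : R α := MonoidAlgebra.ofCoeff (Finsupp.filter (fun v : FreeMonoid α => v.length ≤ n) x.coeff)

lemma truncF_apply (x : R α) (v : FreeMonoid α) :
    truncF n x v = if v.length ≤ n then x v else 0 := Finsupp.filter_apply _ _ _

variable (α) in
def trc : RingCon (R α) where
  r x y := ∀ w : FreeMonoid α, w.length ≤ n → x w = y w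
  iseqv := ⟨fun _ _ _ => rfl, fun h w hw => (h w hw).symm,
    fun h h' w hw => (h w hw).trans (h' w hw)⟩
  add' {a b c d} h h' := fun w hw => by
    rw [MonoidAlgebra.coeff_add, MonoidAlgebra.coeff_add, Finsupp.add_apply, Finsupp.add_apply, h w hw, h' w hw]
  mul' {a b c d} h h' := by
    intro w hw
    have key : ∀ x y : R α, (x * y) w = (truncF n x * truncF n y) w := by
      intro x y
      set tx : R α := truncF n x with htx
      set ty : R α := truncF n y with hty
      set rx : R α := x - truncF n x with hrx
      set ry : R α := y - truncF n y with hry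
      have hx : x = tx + rx := by rw [htx, hrx]; abel
      have hrxs : ∀ v ∈ rx.support, n + 1 ≤ v.length := by
        intro v hv
        have h1 := Finsupp.mem_support_iff.1 hv
        rw [hrx] at h1
        rw [show (x - truncF n x) v = x v - truncF n x v from Finsupp.sub_apply _ _ _,
          truncF_apply] at h1
        by_contra hcon
        rw [if_pos (by omega : v.length ≤ n), sub_self] at h1
        exact h1 rfl
      have hrys : ∀ v ∈ ry.support, n + 1 ≤ v.length := by
        intro v hv
        have h1 := Finsupp.mem_support_iff.1 hv
        rw [hry] at h1
        rw [show (y - truncF n y) v = y v - truncF n y v from Finsupp.sub_apply _ _ _,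
          truncF_apply] at h1
        by_contra hcon
        rw [if_pos (by omega : v.length ≤ n), sub_self] at h1
        exact h1 rfl
      have htxs : ∀ v ∈ tx.support, 0 ≤ v.length := fun v _ => Nat.zero_le _
      have htys : ∀ v ∈ ty.support, 0 ≤ v.length := fun v _ => Nat.zero_le _
      have hy : y = ty + ry := by rw [hty, hry]; abel
      calc (x * y) w = (tx * ty) w + ((tx * ry) w + ((rx * ty) w + (rx * ry) w)) := by
            conv_lhs => rw [hx, hy]
            rw [add_mul, mul_add, mul_add]
            rw [show ∀ u v : R α, (u + v) w = u w + v w from fun u v => Finsupp.add_apply u.coeff v.coeff w]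
            rw [show ∀ u v : R α, (u + v) w = u w + v w from fun u v => Finsupp.add_apply u.coeff v.coeff w]
            rw [show ∀ u v : R α, (u + v) w = u w + v w from fun u v => Finsupp.add_apply u.coeff v.coeff w]
            rw [add_assoc]
        _ = (tx * ty) w := by
            rw [supp_high_mul htxs hrys w (by omega),
              supp_high_mul hrxs htys w (by omega) , supp_high_mul hrxs hrys w (by omega)]
            simp only [add_zero]
    rw [key a c, key b d]
    congr 3 <;> (ext v; rw [truncF_apply, truncF_apply]; split)
    · exact h v ‹_›
    · rfl
    · exact h' v ‹_›
    · rfl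

variable (α) in
abbrev T : Type _ := (trc α n).Quotient

variable (α) in
def pr : R α →+* T α n := (trc α n).mk'

/-- coefficient function on the truncated ring -/
def cf (t : T α n) (w : FreeMonoid α) : ℚ :=
  Quot.liftOn t (fun x => if w.length ≤ n then x w else 0)
    (fun x y h => by
      split
      · exact h w ‹_›
      · rfl)

lemma cf_pr (x : R α) (w : FreeMonoid α) :
    cf n (pr α n x) w = if w.length ≤ n then x w else 0 := rfl

lemma cf_add (s t : T α n) (w : FreeMonoid α) : cf n (s + t) w = cf n s w + cf n t w := by
  induction s using Quot.ind with | _ x => ?_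
  induction t using Quot.ind with | _ y => ?_
  show cf n (pr α n x + pr α n y) w = cf n (pr α n x) w + cf n (pr α n y) w
  rw [← map_add, cf_pr, cf_pr, cf_pr]
  split
  · exact Finsupp.add_apply x.coeff y.coeff w
  · simp

lemma cf_neg (s : T α n) (w : FreeMonoid α) : cf n (-s) w = - cf n s w := by
  induction s using Quot.ind with | _ x => ?_
  show cf n (- pr α n x) w = - cf n (pr α n x) w
  rw [← map_neg, cf_pr, cf_pr]
  split
  · exact Finsupp.neg_apply x.coeff w
  · simp

lemma cf_sub (s t : T α n) (w : FreeMonoid α) : cf n (s - t) w = cf n s w - cf n t w := by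
  rw [sub_eq_add_neg, cf_add, cf_neg, sub_eq_add_neg]

lemma cf_zero (w : FreeMonoid α) : cf n (0 : T α n) w = 0 := by
  show cf n (pr α n 0) w = 0
  rw [cf_pr]
  split <;> simp

lemma cf_mul_vanish {j k : ℕ} (s t : T α n)
    (hs : ∀ w : FreeMonoid α, w.length < j → cf n s w = 0)
    (ht : ∀ w : FreeMonoid α, w.length < k → cf n t w = 0) :
    ∀ w : FreeMonoid α, w.length < j + k → cf n (s * t) w = 0 := by
  classical
  induction s using Quot.ind with | _ x => ?_
  induction t using Quot.ind with | _ y => ?_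
  have hq : ∀ z : R α, Quot.mk (⇑(trc α n).toSetoid) z = pr α n z := fun z => rfl
  rw [hq] at hs ht
  intro w hw
  set tx : R α := truncF n x with htx
  set ty : R α := truncF n y with hty
  have hxx : pr α n x = pr α n tx := by
    refine (RingCon.eq _).2 ?_
    intro v hv
    rw [htx, truncF_apply, if_pos hv]
  have hyy : pr α n y = pr α n ty := by
    refine (RingCon.eq _).2 ?_
    intro v hv
    rw [hty, truncF_apply, if_pos hv]
  have hsx : ∀ v ∈ tx.support, j ≤ v.length := by
    intro v hv
    by_contra hcon
    push_neg at hcon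
    have h1 : tx v ≠ 0 := Finsupp.mem_support_iff.1 hv
    rw [htx, truncF_apply] at h1
    by_cases h2 : v.length ≤ n
    · have := hs v hcon
      rw [cf_pr, if_pos h2] at this
      rw [if_pos h2] at h1
      exact h1 this
    · rw [if_neg h2] at h1
      exact h1 rfl
  have hsy : ∀ v ∈ ty.support, k ≤ v.length := by
    intro v hv
    by_contra hcon
    push_neg at hcon
    have h1 : ty v ≠ 0 := Finsupp.mem_support_iff.1 hv
    rw [hty, truncF_apply] at h1
    by_cases h2 : v.length ≤ n
    · have := ht v hcon
      rw [cf_pr, if_pos h2] at this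
      rw [if_pos h2] at h1
      exact h1 this
    · rw [if_neg h2] at h1
      exact h1 rfl
  show cf n (pr α n x * pr α n y) w = 0
  rw [hxx, hyy, ← map_mul, cf_pr]
  split
  · exact supp_high_mul hsx hsy w hw
  · rfl

end Trunc

section Units

variable (n : ℕ)

lemma pr_negX_pow_zero (a : α) : pr α n ((-(X a))^(n+1)) = 0 := by
  rw [show (0 : T α n) = pr α n 0 from (map_zero _).symm]
  refine (RingCon.eq _).2 ?_
  intro w hw
  rw [neg_X_pow]
  rw [MonoidAlgebra.coeff_single, MonoidAlgebra.coeff_zero, Finsupp.single_eq_of_ne', Finsupp.zero_apply]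
  intro hcon
  have : (List.replicate (n+1) a).length = w.length := congrArg FreeMonoid.length hcon
  simp at this
  omega

def uf (a : α) : (T α n)ˣ where
  val := pr α n (hpos a)
  inv := pr α n (gneg n a)
  val_inv := by
    rw [← map_mul]
    have h1 : hpos a * gneg n a = 1 - (-(X a))^(n+1) := by
      rw [hpos, ← sub_neg_eq_add, gneg, mul_neg_geom_sum]
    rw [h1, map_sub, map_one, pr_negX_pow_zero, sub_zero]
  inv_val := by
    rw [← map_mul]
    have h1 : gneg n a * hpos a = 1 - (-(X a))^(n+1) := by
      rw [hpos, ← sub_neg_eq_add, gneg, geom_sum_mul_neg]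
    rw [h1, map_sub, map_one, pr_negX_pow_zero, sub_zero]

def phi : FreeGroup α →* (T α n)ˣ := FreeGroup.lift fun a => uf n a

lemma phi_val (x : FreeGroup α) :
    ((phi n x : (T α n)ˣ) : T α n) = pr α n (W n x.toWord) := by
  conv_lhs => rw [← FreeGroup.mk_toWord (x := x)]
  rw [phi, FreeGroup.lift_mk]
  rw [← Units.coeHom_apply, map_list_prod, List.map_map]
  rw [W, map_list_prod, List.map_map]
  congr 1
  refine List.map_congr_left ?_
  intro p _
  rcases p with ⟨a, b⟩
  cases b
  · rfl
  · rfl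

/-- the filtration subgroups -/
def H (k : ℕ) : Subgroup ((T α n)ˣ) where
  carrier := {u | ∀ w : FreeMonoid α, w.length < k → cf n ((u : T α n) - 1) w = 0}
  one_mem' := by
    intro w hw
    rw [Units.val_one, sub_self, cf_zero]
  mul_mem' := by
    intro u v hu hv
    intro w hw
    have hexp : ((u : T α n) - 1) * ((v : T α n) - 1) + (((u : T α n) - 1) + ((v : T α n) - 1))
        = (u : T α n) * (v : T α n) - 1 := by
      simp only [sub_mul, mul_sub, mul_one, one_mul]
      abel
    have hid : ((u * v : (T α n)ˣ) : T α n) - 1 =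
        ((u : T α n) - 1) * ((v : T α n) - 1) + (((u : T α n) - 1) + ((v : T α n) - 1)) := by
      rw [Units.val_mul, hexp]
    rw [hid, cf_add, cf_add, hu w hw, hv w hw,
      cf_mul_vanish n (k := k) _ _ hu hv w (by omega)]
    simp
  inv_mem' := by
    intro u hu w hw
    have hid : ((u⁻¹ : (T α n)ˣ) : T α n) - 1 =
        ((u⁻¹ : (T α n)ˣ) : T α n) * (1 - (u : T α n)) := by
      rw [mul_sub, mul_one, Units.inv_mul]
    rw [hid]
    refine cf_mul_vanish n (j := 0) (k := k) _ _ (by intro w hw; omega) ?_ w (by omega)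
    intro w hw
    have : (1 : T α n) - (u : T α n) = -(((u : T α n)) - 1) := by abel
    rw [this, cf_neg, hu w hw, neg_zero]

lemma commutator_mem_H {j k : ℕ} {u v : (T α n)ˣ} (hu : u ∈ H n j) (hv : v ∈ H n k) :
    ⁅u, v⁆ ∈ H n (j + k) := by
  intro w hw
  set A := (u : T α n)
  set B := (v : T α n)
  set A' := ((u⁻¹ : (T α n)ˣ) : T α n)
  set B' := ((v⁻¹ : (T α n)ˣ) : T α n)
  have h1 : A * A' = 1 := u.mul_inv
  have h2 : B * B' = 1 := v.mul_inv
  have e1 : (B * A) * (A' * B') = 1 := by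
    rw [mul_assoc B A (A' * B'), ← mul_assoc A A' B', h1, one_mul, h2]
  have hval : ((⁅u, v⁆ : (T α n)ˣ) : T α n) = A * B * A' * B' := by
    rw [commutatorElement_def]
    rfl
  have hid : ((⁅u, v⁆ : (T α n)ˣ) : T α n) - 1 = (A * B - B * A) * (A' * B') := by
    rw [hval, sub_mul, e1, ← mul_assoc]
  have hid2 : A * B - B * A = (A - 1) * (B - 1) - (B - 1) * (A - 1) := by
    simp only [sub_mul, mul_sub, mul_one, one_mul]
    abel
  rw [hid]
  refine cf_mul_vanish n (j := j + k) (k := 0) _ _ ?_ (by intro w hw; omega) w (by omega)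
  intro w hw
  rw [hid2, cf_sub, cf_mul_vanish n (j := j) (k := k) _ _ hu hv w hw,
    cf_mul_vanish n (j := k) (k := j) _ _ hv hu w (by omega), sub_self]

lemma phi_mem_H_one (x : FreeGroup α) : phi n x ∈ H n 1 := by
  induction x using FreeGroup.induction_on with
  | C1 => rw [map_one]; exact (H n 1).one_mem
  | of a =>
    intro w hw
    have hw1 : w = 1 := FreeMonoid.length_eq_zero.1 (by omega)
    subst hw1
    have : ((phi n (FreeGroup.of a) : (T α n)ˣ) : T α n) = pr α n (hpos a) := by
      rw [phi, FreeGroup.lift_apply_of]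
      rfl
    rw [this, show (1 : T α n) = pr α n 1 from (map_one _).symm, ← map_sub, cf_pr,
      if_pos (by simp [FreeMonoid.length_one])]
    have : hpos a - 1 = X a := by rw [hpos]; abel
    rw [this, X, MonoidAlgebra.coeff_single, Finsupp.single_eq_of_ne' (FreeMonoid.of_ne_one a)]
  | inv_of a ih => rw [map_inv]; exact (H n 1).inv_mem ih
  | mul x y ihx ihy => rw [map_mul]; exact (H n 1).mul_mem ihx ihy

lemma derived_le (m : ℕ) :
    (derivedSeries (FreeGroup α) m).map (phi (α := α) n) ≤ H n (2^m) := by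
  induction m with
  | zero =>
    rintro u ⟨x, -, rfl⟩
    rw [pow_zero]
    exact phi_mem_H_one n x
  | succ m ih =>
    rw [derivedSeries_succ, Subgroup.map_commutator]
    refine le_trans (Subgroup.commutator_mono ih ih) ?_
    refine Subgroup.commutator_le.mpr ?_
    intro u hu v hv
    have := commutator_mem_H n hu hv
    rwa [show 2^m + 2^m = 2^(m+1) by rw [pow_succ]; omega] at this

end Units

end Magnus

theorem stmt_10 (α : Type*) :
    (⨅ n : ℕ, derivedSeries (FreeGroup α) n) = ⊥ := by
  rw [eq_bot_iff]
  intro x hx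
  rw [Subgroup.mem_iInf] at hx
  rw [Subgroup.mem_bot]
  by_contra hx1
  classical
  set L := x.toWord with hL
  have hLne : L ≠ [] := fun h => hx1 (FreeGroup.toWord_eq_nil_iff.1 h)
  set n := L.length with hn
  have hn1 : 1 ≤ n := by
    rw [hn]
    rcases L with _ | ⟨p, L'⟩
    · exact absurd rfl hLne
    · simp
  have hred : ∀ (L₁ L₂ : List (α × Bool)) (xx : α) (b : Bool),
      L ≠ L₁ ++ (xx, b) :: (xx, !b) :: L₂ := by
    intro L₁ L₂ xx b h
    have hr : FreeGroup.reduce L = L₁ ++ (xx, b) :: (xx, !b) :: L₂ := by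
      rw [hL, FreeGroup.reduce_toWord, ← hL, h]
    exact FreeGroup.reduce.not hr
  obtain ⟨μ, q, hq, hμc, hμl, hμn, -, hcoeff⟩ :=
    Magnus.main_claim (α := α) hn1 n L le_rfl hred
  have hμne : μ ≠ [] := fun h => hLne (hμn.1 h)
  -- x is in the 2^n-th filtration subgroup
  have hmem : Magnus.phi n x ∈ Magnus.H n (2^n) :=
    Magnus.derived_le n n ⟨x, hx n, rfl⟩
  have hcf := hmem (FreeMonoid.ofList μ) (by
    show μ.length < 2^n
    calc μ.length ≤ n := hμl
    _ < 2^n := Nat.lt_two_pow_self)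
  rw [Magnus.phi_val] at hcf
  rw [show (1 : Magnus.T α n) = Magnus.pr α n 1 from (map_one _).symm, ← map_sub,
    Magnus.cf_pr, if_pos (by exact hμl : (FreeMonoid.ofList μ).length ≤ n)] at hcf
  rw [MonoidAlgebra.coeff_sub, Finsupp.sub_apply] at hcf
  rw [hcoeff μ hμc le_rfl, if_pos rfl] at hcf
  rw [Magnus.coeff_one_ne (by
    intro h
    have : μ.length = (0:ℕ) := congrArg FreeMonoid.length h
    rcases μ with _ | ⟨c, m'⟩
    · exact hμne rfl
    · simp at this)] at hcf
  rw [sub_zero] at hcf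
  exact hq hcf
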